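/- (Semismooth Newton step error bound) Let x* be a nondegenerate local minimizer of φ with grad φ μ-order semismooth at x*. Then there exist β > 0 and a neighborhood U of x* such that for all x ∈ U and H ∈ ∂grad φ(x), ‖H⁻¹ grad φ(x) + exp_x^{-1}(x*)‖ ≤ β dist(x, x*)^{1+μ}. -/
import Mathlib


/-- semismooth Newton step error bound: near a nondegenerate local
minimizer `xs` of `φ` with `grad φ` being `μ`-order semismooth at `xs`, there exist
`β > 0` and a neighborhood (a ball of radius `δ`) such that for every `x` in it and
every `H ∈ ∂grad φ(x)` (with inverse `Hinv`),
`‖H⁻¹ grad φ(x) + exp_x⁻¹(xs)‖ ≤ β dist(x,xs)^(1+μ)`. -/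
theorem stmt_13
    {E : Type*} [NormedAddCommGroup E] [InnerProductSpace ℝ E]
    {M : Type*} [MetricSpace M]
    (grad : M → E) (Dgrad : M → Set (E →L[ℝ] E))
    (P : M → M → (E →L[ℝ] E)) (Log : M → M → E) (xs : M)
    (μ : ℝ) (hμ : 0 ≤ μ)
    (hgrad0 : grad xs = 0)
    (hPiso : ∀ p q : M, ∀ v : E, ‖P p q v‖ = ‖v‖)
    (hLog : ∀ y : M, ‖Log y xs‖ = dist y xs)
    (hss : ∀ ε > 0, ∃ δ > 0, ∀ y : M, dist y xs < δ → ∀ H ∈ Dgrad y,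
      ‖grad xs - P y xs (grad y + H (Log y xs))‖ ≤ ε * dist xs y ^ (1 + μ))
    (β₀ δ₀ : ℝ) (hβ₀ : 0 < β₀) (hδ₀ : 0 < δ₀)
    (hinvbound : ∀ x ∈ Metric.ball xs δ₀, ∀ H ∈ Dgrad x,
      ∀ Hinv : E →L[ℝ] E, (∀ v, Hinv (H v) = v ∧ H (Hinv v) = v) → ‖Hinv‖ ≤ β₀) :
    ∃ β > 0, ∃ δ > 0, ∀ x ∈ Metric.ball xs δ, ∀ H ∈ Dgrad x,
      ∀ Hinv : E →L[ℝ] E, (∀ v, Hinv (H v) = v ∧ H (Hinv v) = v) →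
        ‖Hinv (grad x) + Log x xs‖ ≤ β * dist x xs ^ (1 + μ) := by
  obtain ⟨δ₁, hδ₁, h1⟩ := hss 1 one_pos
  refine ⟨β₀, hβ₀, min δ₀ δ₁, lt_min hδ₀ hδ₁, ?_⟩
  intro x hx H hH Hinv hHinv
  have hx₀ : x ∈ Metric.ball xs δ₀ := Metric.ball_subset_ball (min_le_left _ _) hx
  have hx₁ : dist x xs < δ₁ := lt_of_lt_of_le (Metric.mem_ball.mp hx) (min_le_right _ _)
  have hbound := hinvbound x hx₀ H hH Hinv hHinv
  have key : ‖grad x + H (Log x xs)‖ ≤ dist x xs ^ (1 + μ) := by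
    have := h1 x hx₁ H hH
    rw [hgrad0, zero_sub, norm_neg, hPiso, dist_comm xs x] at this
    simpa using this
    -- `1 * _ = _`
  have heq : Hinv (grad x) + Log x xs = Hinv (grad x + H (Log x xs)) := by
    rw [map_add, (hHinv (Log x xs)).1]
  calc ‖Hinv (grad x) + Log x xs‖ = ‖Hinv (grad x + H (Log x xs))‖ := by rw [heq]
    _ ≤ ‖Hinv‖ * ‖grad x + H (Log x xs)‖ := Hinv.le_opNorm _
    _ ≤ β₀ * dist x xs ^ (1 + μ) := by
        apply mul_le_mul hbound key (norm_nonneg _) hβ₀.le
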